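/- arXiv:1902.09134 — 2 statements merged into one kernel-verified Lean document; each statement's English description precedes it below -/
import Mathlib

section
/- Let f'_{l,t1,t2}(w_1,…,w_l) = (∏_{i=1}^l w_i^{t1} / ∏_{i=1}^l (1+w_i)^{t2}) · ∏_{i<j} (w_i − w_j)^2. Then the partial integral g'_{l,t1,t2}(w_l) = ∫_0^∞ ⋯ ∫_0^∞ f'_{l,t1,t2} dw_1⋯dw_{l−1} equals Σ_{σ1,σ2 ∈ S_l} sign(σ1)sign(σ2) · (w_l^{t1+2l−σ1(l)−σ2(l)} / (1+w_l)^{t2}) · ∏_{i=1}^{l−1} B(t1+2l−σ1(i)−σ2(i)+1, t2−t1−2l−1+σ1(i)+σ2(i)), provided t1 ≥ 0 and t2 > t1 + 2l so that all Beta arguments are positive. -/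
open MeasureTheory Equiv

/-- The Beta function `B(x,y) = Γ(x)Γ(y)/Γ(x+y)`. -/
noncomputable def realBeta (x y : ℝ) : ℝ := Real.Gamma x * Real.Gamma y / Real.Gamma (x + y)

lemma beta01 (m n : ℕ) :
    ∫ x in (0:ℝ)..1, x ^ m * (1 - x) ^ n =
      (m.factorial * n.factorial : ℝ) / (m + n + 1).factorial := by
  have h := Complex.Gamma_mul_Gamma_eq_betaIntegral
    (s := (m : ℂ) + 1) (t := (n : ℂ) + 1) (by simp; positivity) (by simp; positivity)
  have hbeta : Complex.betaIntegral ((m:ℂ)+1) ((n:ℂ)+1)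
      = ((∫ x in (0:ℝ)..1, x ^ m * (1 - x) ^ n : ℝ) : ℂ) := by
    rw [Complex.betaIntegral, ← intervalIntegral.integral_ofReal]
    apply intervalIntegral.integral_congr
    intro x _
    dsimp only
    rw [add_sub_cancel_right, add_sub_cancel_right, Complex.cpow_natCast, Complex.cpow_natCast]
    push_cast
    ring
  rw [hbeta] at h
  have h1 : Complex.Gamma ((m:ℂ)+1) = (m.factorial : ℂ) := by
    rw [show ((m:ℂ)+1) = ((m:ℕ):ℂ)+1 by push_cast; ring, Complex.Gamma_nat_eq_factorial]
  have h2 : Complex.Gamma ((n:ℂ)+1) = (n.factorial : ℂ) := by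
    rw [show ((n:ℂ)+1) = ((n:ℕ):ℂ)+1 by push_cast; ring, Complex.Gamma_nat_eq_factorial]
  have h3 : Complex.Gamma ((m:ℂ)+1+((n:ℂ)+1)) = ((m+n+1).factorial : ℂ) := by
    rw [show ((m:ℂ)+1+((n:ℂ)+1)) = ((m+n+1:ℕ):ℂ)+1 by push_cast; ring,
      Complex.Gamma_nat_eq_factorial]
  rw [h1, h2, h3] at h
  have hne : ((m+n+1).factorial : ℂ) ≠ 0 := by exact_mod_cast (m+n+1).factorial_ne_zero
  have : ((∫ x in (0:ℝ)..1, x ^ m * (1 - x) ^ n : ℝ) : ℂ)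
      = (m.factorial * n.factorial : ℝ) / ((m+n+1).factorial : ℝ) := by
    push_cast
    rw [eq_div_iff (by exact_mod_cast hne)]
    push_cast at h
    linear_combination -h
  exact_mod_cast this

lemma betaIoi (a b : ℕ) (hab : a + 2 ≤ b) :
    IntegrableOn (fun t : ℝ => t ^ a / (1 + t) ^ b) (Set.Ioi 0) ∧
    ∫ t in Set.Ioi (0:ℝ), t ^ a / (1 + t) ^ b
      = (a.factorial * (b - a - 2).factorial : ℝ) / (b - 1).factorial := by
  obtain ⟨m, rfl⟩ : ∃ m, b = m + (a + 2) := ⟨b - a - 2, by omega⟩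
  set f : ℝ → ℝ := fun u => u⁻¹ - 1 with hf
  set g : ℝ → ℝ := fun t => t ^ a / (1 + t) ^ (m + (a + 2)) with hg
  have himg : f '' Set.Ioo 0 1 = Set.Ioi (0:ℝ) := by
    ext y
    simp only [Set.mem_image, Set.mem_Ioo, Set.mem_Ioi]
    constructor
    · rintro ⟨u, ⟨hu0, hu1⟩, rfl⟩
      have h1 : f u = (1 - u) / u := by
        simp only [hf]; field_simp
      rw [h1]
      exact div_pos (by linarith) hu0
    · intro hy
      refine ⟨(1 + y)⁻¹, ⟨by positivity, ?_⟩, ?_⟩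
      · rw [inv_lt_one_iff₀]
        right; linarith
      · simp only [hf, inv_inv]; ring
  have hd : ∀ u ∈ Set.Ioo (0:ℝ) 1, HasDerivWithinAt f (-(u ^ 2)⁻¹) (Set.Ioo 0 1) u :=
    fun u hu => ((hasDerivAt_inv (ne_of_gt hu.1)).sub_const 1).hasDerivWithinAt
  have hinj : Set.InjOn f (Set.Ioo 0 1) := by
    intro u _ v _ h
    simp only [hf] at h
    have : u⁻¹ = v⁻¹ := by linarith
    exact inv_injective this
  have heq : ∀ u ∈ Set.Ioo (0:ℝ) 1, |(-(u ^ 2)⁻¹)| • g (f u) = (1 - u) ^ a * u ^ m := by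
    intro u hu
    obtain ⟨hu0, hu1⟩ := hu
    have hu0' : u ≠ 0 := ne_of_gt hu0
    have h1 : f u = (1 - u) / u := by simp only [hf]; field_simp
    have h2 : 1 + f u = u⁻¹ := by simp only [hf]; ring
    have h3 : |(-(u ^ 2)⁻¹)| = (u ^ 2)⁻¹ := by
      rw [abs_neg, abs_of_pos (by positivity)]
    rw [smul_eq_mul, h3, hg]
    simp only
    rw [h2, h1, div_pow, inv_pow]
    field_simp
    ring
  have hcont : Continuous (fun u : ℝ => (1 - u) ^ a * u ^ m) := by continuity
  have hint2 : IntegrableOn (fun u : ℝ => (1 - u) ^ a * u ^ m) (Set.Ioo 0 1) :=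
    (hcont.integrableOn_Icc (a := 0) (b := 1)).mono_set Set.Ioo_subset_Icc_self
  have e1 : m + (a + 2) - a - 2 = m := by omega
  have e2 : m + (a + 2) - 1 = m + a + 1 := by omega
  constructor
  · rw [← himg, integrableOn_image_iff_integrableOn_abs_deriv_smul measurableSet_Ioo hd hinj]
    exact hint2.congr_fun (fun u hu => (heq u hu).symm) measurableSet_Ioo
  · rw [← himg, integral_image_eq_integral_abs_deriv_smul measurableSet_Ioo hd hinj,
      setIntegral_congr_fun measurableSet_Ioo heq]
    rw [← integral_Ioc_eq_integral_Ioo, ← intervalIntegral.integral_of_le zero_le_one]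
    have hb := beta01 m a
    have : ∫ x in (0:ℝ)..1, (1 - x) ^ a * x ^ m = ∫ x in (0:ℝ)..1, x ^ m * (1 - x) ^ a := by
      apply intervalIntegral.integral_congr
      intro x _; ring
    rw [this, hb, e1, e2]
    ring

lemma det_N (k : ℕ) (w : Fin (k+1) → ℝ) :
    (Matrix.of fun i j : Fin (k+1) => w i ^ (k - (j:ℕ))).det
      = ∑ σ : Equiv.Perm (Fin (k+1)), ((Equiv.Perm.sign σ : ℤ):ℝ) * ∏ i, w i ^ (k - ((σ i : ℕ))) := by
  rw [← Matrix.det_transpose, Matrix.det_apply']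
  rfl

lemma sq_vandermonde (k : ℕ) (w : Fin (k+1) → ℝ) :
    ∏ i : Fin (k+1), ∏ j ∈ Finset.Ioi i, (w i - w j) ^ 2
      = ((Matrix.of fun i j : Fin (k+1) => w i ^ (k - (j:ℕ))).det) ^ 2 := by
  have hN : (Matrix.of fun i j : Fin (k+1) => w i ^ (k - (j:ℕ)))
      = (Matrix.vandermonde w).submatrix id (Fin.revPerm : Equiv.Perm (Fin (k+1))) := by
    ext i j
    simp only [Matrix.of_apply, Matrix.submatrix_apply, id_eq, Matrix.vandermonde_apply,
      Fin.revPerm_apply, Fin.val_rev]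
    congr 1
    omega
  rw [hN, Matrix.det_permute', Matrix.det_vandermonde]
  rcases Int.units_eq_one_or (Equiv.Perm.sign (Fin.revPerm : Equiv.Perm (Fin (k+1)))) with h | h <;>
    rw [h] <;> push_cast <;>
    rw [mul_pow, ← Finset.prod_pow] <;>
    simp only [neg_one_sq, one_pow, one_mul] <;>
  · apply Finset.prod_congr rfl
    intro i _
    rw [← Finset.prod_pow]
    apply Finset.prod_congr rfl
    intro j _
    ring

lemma expand (k t1 t2 : ℕ) (w : Fin (k+1) → ℝ) :
    (∏ i : Fin (k+1), w i ^ t1 / (1 + w i) ^ t2) *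
      ∏ i : Fin (k+1), ∏ j ∈ Finset.Ioi i, (w i - w j) ^ 2
    = ∑ σ1 : Equiv.Perm (Fin (k+1)), ∑ σ2 : Equiv.Perm (Fin (k+1)),
        ((Equiv.Perm.sign σ1 : ℤ):ℝ) * ((Equiv.Perm.sign σ2 : ℤ):ℝ) *
          ∏ i : Fin (k+1),
            w i ^ (t1 + (k - ((σ1 i : ℕ))) + (k - ((σ2 i : ℕ)))) / (1 + w i) ^ t2 := by
  rw [sq_vandermonde, det_N, sq, Finset.sum_mul_sum, Finset.mul_sum]
  apply Finset.sum_congr rfl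
  intro σ1 _
  rw [Finset.mul_sum]
  apply Finset.sum_congr rfl
  intro σ2 _
  have hP : ∏ i : Fin (k+1),
        w i ^ (t1 + (k - ((σ1 i : ℕ))) + (k - ((σ2 i : ℕ)))) / (1 + w i) ^ t2
      = (∏ i : Fin (k+1), w i ^ t1 / (1 + w i) ^ t2) *
          ((∏ i : Fin (k+1), w i ^ (k - ((σ1 i : ℕ)))) *
            (∏ i : Fin (k+1), w i ^ (k - ((σ2 i : ℕ))))) := by
    rw [← Finset.prod_mul_distrib, ← Finset.prod_mul_distrib]
    apply Finset.prod_congr rfl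
    intro i _
    rw [pow_add, pow_add]
    ring
  rw [hP]
  ring

lemma indicator_pi {k : ℕ} (h : Fin k → ℝ → ℝ) :
    (Set.univ.pi fun _ : Fin k => Set.Ioi (0:ℝ)).indicator (fun v => ∏ i, h i (v i))
      = fun v => ∏ i, (Set.Ioi (0:ℝ)).indicator (h i) (v i) := by
  ext v
  by_cases hv : v ∈ Set.univ.pi fun _ : Fin k => Set.Ioi (0:ℝ)
  · rw [Set.indicator_of_mem hv]
    exact Finset.prod_congr rfl fun i _ =>
      (Set.indicator_of_mem (hv i (Set.mem_univ i)) _).symm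
  · rw [Set.indicator_of_notMem hv]
    rw [Set.mem_univ_pi] at hv
    push_neg at hv
    obtain ⟨i, hi⟩ := hv
    exact (Finset.prod_eq_zero (Finset.mem_univ i) (Set.indicator_of_notMem hi _)).symm

lemma pi_integral {k : ℕ} (h : Fin k → ℝ → ℝ) (hint : ∀ i, IntegrableOn (h i) (Set.Ioi 0)) :
    IntegrableOn (fun v : Fin k → ℝ => ∏ i, h i (v i))
      (Set.univ.pi fun _ : Fin k => Set.Ioi (0:ℝ)) ∧
    ∫ v in Set.univ.pi (fun _ : Fin k => Set.Ioi (0:ℝ)), ∏ i, h i (v i)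
      = ∏ i, ∫ t in Set.Ioi (0:ℝ), h i t := by
  have hmeas : MeasurableSet (Set.univ.pi fun _ : Fin k => Set.Ioi (0:ℝ)) :=
    MeasurableSet.univ_pi fun _ => measurableSet_Ioi
  have hI : ∀ i, Integrable ((Set.Ioi (0:ℝ)).indicator (h i)) := fun i =>
    (integrable_indicator_iff measurableSet_Ioi).mpr (hint i)
  constructor
  · refine (integrable_indicator_iff hmeas).mp ?_
    rw [indicator_pi]
    exact Integrable.fintype_prod hI
  · rw [← integral_indicator hmeas, indicator_pi, volume_pi,
      integral_fintype_prod_eq_prod (fun i => (Set.Ioi (0:ℝ)).indicator (h i))]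
    exact Finset.prod_congr rfl fun i _ => integral_indicator measurableSet_Ioi

lemma realBeta_nat (a b : ℕ) (hab : a + 2 ≤ b) :
    realBeta ((a:ℝ) + 1) ((b:ℝ) - a - 1)
      = (a.factorial * (b - a - 2).factorial : ℝ) / (b - 1).factorial := by
  obtain ⟨m, rfl⟩ : ∃ m, b = m + (a + 2) := ⟨b - a - 2, by omega⟩
  have e1 : m + (a + 2) - a - 2 = m := by omega
  have e2 : m + (a + 2) - 1 = m + a + 1 := by omega
  rw [e1, e2, realBeta]
  have g1 : Real.Gamma ((a:ℝ) + 1) = a.factorial := Real.Gamma_nat_eq_factorial a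
  have h2 : ((m + (a + 2) : ℕ):ℝ) - a - 1 = (m:ℝ) + 1 := by push_cast; ring
  have h3 : (a:ℝ) + 1 + ((m:ℝ) + 1) = ((m + a + 1 : ℕ):ℝ) + 1 := by
    push_cast; ring
  rw [h2, h3, g1, Real.Gamma_nat_eq_factorial, Real.Gamma_nat_eq_factorial]

/-- With `l = k+1 ≥ 1`, `f'_{l,t1,t2}(w₁,…,w_l) = (∏ wᵢ^{t1}/(1+wᵢ)^{t2}) ∏_{i<j}(wᵢ−wⱼ)²`,
and `t2 > t1 + 2l`, the partial integral
`g'_{l,t1,t2}(w_l) = ∫_{(0,∞)^{l−1}} f' dw₁⋯dw_{l−1}` equals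
`Σ_{σ₁,σ₂ ∈ S_l} sign(σ₁)sign(σ₂) · w_l^{t1+2l−σ₁(l)−σ₂(l)}/(1+w_l)^{t2}
  · ∏_{i=1}^{l−1} B(t1+2l−σ₁(i)−σ₂(i)+1, t2−t1−2l−1+σ₁(i)+σ₂(i))`
(permutations are `Fin (k+1)`-valued, so `σ(i)` in `{1,…,l}` corresponds to `(σ i).val + 1`). -/
theorem stmt7 (k t1 t2 : ℕ) (ht : t1 + 2 * (k + 1) < t2) (x : ℝ) (hx : 0 < x) :
    (∫ v in Set.univ.pi (fun _ : Fin k => Set.Ioi (0 : ℝ)),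
        (∏ i : Fin (k + 1), ((Fin.snoc v x : Fin (k + 1) → ℝ) i) ^ t1 / (1 + (Fin.snoc v x : Fin (k + 1) → ℝ) i) ^ t2) *
          ∏ i : Fin (k + 1), ∏ j ∈ Finset.Ioi i, ((Fin.snoc v x : Fin (k + 1) → ℝ) i - (Fin.snoc v x : Fin (k + 1) → ℝ) j) ^ 2) =
      ∑ σ1 : Equiv.Perm (Fin (k + 1)), ∑ σ2 : Equiv.Perm (Fin (k + 1)),
        ((Equiv.Perm.sign σ1 : ℤ) : ℝ) * ((Equiv.Perm.sign σ2 : ℤ) : ℝ) *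
          (x ^ (t1 + 2 * (k + 1) - ((σ1 (Fin.last k) : ℕ) + 1) - ((σ2 (Fin.last k) : ℕ) + 1)) /
            (1 + x) ^ t2) *
          ∏ i : Fin k,
            realBeta
              ((t1 + 2 * (k + 1) - ((σ1 i.castSucc : ℕ) + 1) - ((σ2 i.castSucc : ℕ) + 1) : ℕ) + 1)
              ((t2 : ℝ) - t1 - 2 * (k + 1) - 1 +
                (((σ1 i.castSucc : ℕ) : ℝ) + 1) + (((σ2 i.castSucc : ℕ) : ℝ) + 1)) := by
  have hmeas : MeasurableSet (Set.univ.pi fun _ : Fin k => Set.Ioi (0:ℝ)) :=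
    MeasurableSet.univ_pi fun _ => measurableSet_Ioi
  have hble : ∀ (σ : Equiv.Perm (Fin (k+1))) (i : Fin (k+1)), (σ i : ℕ) ≤ k := fun σ i =>
    Fin.is_le _
  have hexp : ∀ (σ1 σ2 : Equiv.Perm (Fin (k+1))) (i : Fin (k+1)),
      t1 + 2*(k+1) - ((σ1 i : ℕ)+1) - ((σ2 i : ℕ)+1)
        = t1 + (k - (σ1 i : ℕ)) + (k - (σ2 i : ℕ)) := by
    intro σ1 σ2 i
    have := hble σ1 i; have := hble σ2 i
    omega
  have hle : ∀ (σ1 σ2 : Equiv.Perm (Fin (k+1))) (i : Fin (k+1)),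
      (t1 + (k - (σ1 i : ℕ)) + (k - (σ2 i : ℕ))) + 2 ≤ t2 := by
    intro σ1 σ2 i
    have := hble σ1 i; have := hble σ2 i
    omega
  have hint1 : ∀ (σ1 σ2 : Equiv.Perm (Fin (k+1))) (i : Fin (k+1)),
      IntegrableOn (fun t : ℝ =>
        t ^ (t1 + (k - (σ1 i:ℕ)) + (k - (σ2 i:ℕ))) / (1+t)^t2) (Set.Ioi 0) :=
    fun σ1 σ2 i => (betaIoi _ _ (hle σ1 σ2 i)).1
  have step1 : (∫ v in Set.univ.pi (fun _ : Fin k => Set.Ioi (0 : ℝ)),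
        (∏ i : Fin (k + 1), ((Fin.snoc v x : Fin (k + 1) → ℝ) i) ^ t1 / (1 + (Fin.snoc v x : Fin (k + 1) → ℝ) i) ^ t2) *
          ∏ i : Fin (k + 1), ∏ j ∈ Finset.Ioi i, ((Fin.snoc v x : Fin (k + 1) → ℝ) i - (Fin.snoc v x : Fin (k + 1) → ℝ) j) ^ 2)
      = ∫ v in Set.univ.pi (fun _ : Fin k => Set.Ioi (0 : ℝ)),
          ∑ σ1 : Equiv.Perm (Fin (k+1)), ∑ σ2 : Equiv.Perm (Fin (k+1)),
            (((Equiv.Perm.sign σ1 : ℤ):ℝ) * ((Equiv.Perm.sign σ2 : ℤ):ℝ) *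
              (x ^ (t1 + 2*(k+1) - ((σ1 (Fin.last k) : ℕ)+1) - ((σ2 (Fin.last k) : ℕ)+1)) / (1+x)^t2)) *
              ∏ i : Fin k, (v i) ^ (t1 + (k - ((σ1 i.castSucc : ℕ))) + (k - ((σ2 i.castSucc : ℕ)))) / (1 + v i) ^ t2 := by
    apply setIntegral_congr_fun hmeas
    intro v _
    dsimp only
    rw [expand k t1 t2 (Fin.snoc v x)]
    refine Finset.sum_congr rfl fun σ1 _ => Finset.sum_congr rfl fun σ2 _ => ?_
    rw [Fin.prod_univ_castSucc]
    simp only [Fin.snoc_castSucc, Fin.snoc_last]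
    rw [hexp σ1 σ2 (Fin.last k)]
    ring
  rw [step1, integral_finset_sum]
  · refine Finset.sum_congr rfl fun σ1 _ => ?_
    rw [integral_finset_sum]
    · refine Finset.sum_congr rfl fun σ2 _ => ?_
      rw [integral_const_mul]
      have hfub := (pi_integral
        (fun (i : Fin k) (t : ℝ) =>
          t ^ (t1 + (k - ((σ1 i.castSucc : ℕ))) + (k - ((σ2 i.castSucc : ℕ)))) / (1 + t) ^ t2)
        (fun i => hint1 σ1 σ2 i.castSucc)).2
      rw [hfub]
      refine congrArg _ (Finset.prod_congr rfl fun i _ => ?_)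
      rw [(betaIoi _ t2 (hle σ1 σ2 i.castSucc)).2,
        ← realBeta_nat _ t2 (hle σ1 σ2 i.castSucc)]
      congr 1
      · rw [hexp σ1 σ2 i.castSucc]
      · push_cast [Nat.cast_sub (hble σ1 i.castSucc), Nat.cast_sub (hble σ2 i.castSucc)]
        ring
    · intro σ2 _
      exact ((pi_integral _ (fun i => hint1 σ1 σ2 i.castSucc)).1.const_mul _)
  · intro σ1 _
    exact integrable_finset_sum _ fun σ2 _ =>
      ((pi_integral _ (fun i => hint1 σ1 σ2 i.castSucc)).1.const_mul _)
end

section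
/- With g'_{l,t1,t2} defined as the (l−1)-fold integral of f'_{l,t1,t2}(w_1,…,w_l) over w_1,…,w_{l−1} ∈ (0,∞), the functional identity g'_{l,t1,t2}(1/w) = w^2 · g'_{l,t1',t2}(w) holds for all w > 0, where t1' = t2 − t1 − 2l. -/
open MeasureTheory

lemma det_pi_smul_proj {k : ℕ} (c : Fin k → ℝ) :
    (ContinuousLinearMap.pi fun i => c i •
      (ContinuousLinearMap.proj i : ((Fin k → ℝ) →L[ℝ] ℝ))).det = ∏ i, c i := by
  have h0 : (ContinuousLinearMap.pi fun i => c i •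
      (ContinuousLinearMap.proj i : ((Fin k → ℝ) →L[ℝ] ℝ))).det
      = LinearMap.det ((ContinuousLinearMap.pi fun i => c i •
      (ContinuousLinearMap.proj i : ((Fin k → ℝ) →L[ℝ] ℝ))) : (Fin k → ℝ) →ₗ[ℝ] (Fin k → ℝ)) := rfl
  rw [h0, ← LinearMap.det_toMatrix']
  have hm : LinearMap.toMatrix' ((ContinuousLinearMap.pi fun i => c i •
      (ContinuousLinearMap.proj i : ((Fin k → ℝ) →L[ℝ] ℝ))) : (Fin k → ℝ) →ₗ[ℝ] (Fin k → ℝ))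
      = Matrix.diagonal c := by
    ext i j
    simp [LinearMap.toMatrix'_apply, Matrix.diagonal, eq_comm, Pi.single_apply]
  rw [hm, Matrix.det_diagonal]

lemma prod_pairs_mul {n : ℕ} (c : Fin n → ℝ) :
    (∏ i : Fin n, ∏ j ∈ Finset.Ioi i, (c i * c j)) = ∏ i : Fin n, c i ^ (n - 1) := by
  have h1 : (∏ i : Fin n, ∏ j ∈ Finset.Ioi i, (c i * c j))
      = (∏ i : Fin n, c i ^ (Finset.Ioi i).card) * ∏ i : Fin n, ∏ j ∈ Finset.Ioi i, c j := by
    rw [← Finset.prod_mul_distrib]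
    refine Finset.prod_congr rfl fun i _ => ?_
    rw [Finset.prod_mul_distrib, Finset.prod_const]
  have h2 : (∏ i : Fin n, ∏ j ∈ Finset.Ioi i, c j)
      = ∏ j : Fin n, c j ^ (Finset.Iio j).card := by
    rw [Finset.prod_comm' (t' := Finset.univ) (s' := fun j => Finset.Iio j)
      (by intro x y; simp [Finset.mem_Ioi, Finset.mem_Iio])]
    exact Finset.prod_congr rfl fun j _ => Finset.prod_const _
  rw [h1, h2, ← Finset.prod_mul_distrib]
  refine Finset.prod_congr rfl fun i _ => ?_
  rw [← pow_add, Fin.card_Ioi, Fin.card_Iio]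
  congr 1
  omega

lemma per_index {n t1 t2 : ℕ} (h : t1 + 2*n ≤ t2) (hn : 0 < n) {x : ℝ} (hx : 0 < x) :
    ((x^2)⁻¹) * ((x⁻¹)^t1/(1+x⁻¹)^t2) * ((x^2)⁻¹)^(n-1)
      = x^(t2-t1-2*n)/(1+x)^t2 := by
  have hx0 : x ≠ 0 := ne_of_gt hx
  have h1x : (1:ℝ) + x ≠ 0 := by positivity
  have e1 : (1:ℝ) + x⁻¹ = (1+x)/x := by field_simp; ring
  have e2 : ((x^2)⁻¹) * ((x^2)⁻¹)^(n-1) = (x^(2*n))⁻¹ := by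
    rw [← pow_succ']
    have hh : n - 1 + 1 = n := by omega
    rw [hh, ← inv_pow, ← pow_mul, inv_pow]
  have e3 : x^(t2-t1-2*n) = x^t2 / x^t1 / x^(2*n) := by
    rw [pow_sub₀ _ hx0 (show 2*n ≤ t2 - t1 by omega), pow_sub₀ _ hx0 (show t1 ≤ t2 by omega)]
    rw [div_eq_mul_inv, div_eq_mul_inv]
  rw [e1, e3, mul_right_comm, e2, div_pow, inv_pow]
  field_simp

lemma key_alg {n t1 t2 : ℕ} (h : t1 + 2*n ≤ t2) (x : Fin n → ℝ) (hx : ∀ i, 0 < x i) :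
    (∏ i : Fin n, ((x i)^2)⁻¹) *
      ((∏ i : Fin n, ((x i)⁻¹)^t1/(1+(x i)⁻¹)^t2) *
        ∏ i : Fin n, ∏ j ∈ Finset.Ioi i, ((x i)⁻¹-(x j)⁻¹)^2)
    = (∏ i : Fin n, (x i)^(t2-t1-2*n)/(1+x i)^t2) *
        ∏ i : Fin n, ∏ j ∈ Finset.Ioi i, (x i - x j)^2 := by
  rcases Nat.eq_zero_or_pos n with hn | hn
  · subst hn; simp
  have hx0 : ∀ i, x i ≠ 0 := fun i => ne_of_gt (hx i)
  have hV : (∏ i : Fin n, ∏ j ∈ Finset.Ioi i, ((x i)⁻¹-(x j)⁻¹)^2)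
      = (∏ i : Fin n, ∏ j ∈ Finset.Ioi i, (((x i)^2)⁻¹ * ((x j)^2)⁻¹)) *
        ∏ i : Fin n, ∏ j ∈ Finset.Ioi i, (x i - x j)^2 := by
    rw [← Finset.prod_mul_distrib]
    refine Finset.prod_congr rfl fun i _ => ?_
    rw [← Finset.prod_mul_distrib]
    refine Finset.prod_congr rfl fun j _ => ?_
    rw [inv_sub_inv (hx0 i) (hx0 j), div_pow, mul_pow, div_eq_mul_inv, mul_inv]
    ring
  rw [hV, prod_pairs_mul (fun i => ((x i)^2)⁻¹)]
  rw [show ∀ a b c d : ℝ, a * (b * (c * d)) = ((a * b * c) * d) by intros; ring]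
  rw [← Finset.prod_mul_distrib, ← Finset.prod_mul_distrib]
  congr 1
  exact Finset.prod_congr rfl fun i _ => per_index h hn (hx i)

/-- `g'_{l,t1,t2}(x)` for `l = k+1`: the `(l−1)`-fold integral over `(0,∞)^{l−1}` of
`f'_{l,t1,t2}(w₁,…,w_{l−1}, x) = ∏ᵢ wᵢ^{t1}(1+wᵢ)^{−t2} · ∏_{i<j}(wᵢ−wⱼ)²`,
where the last variable is fixed to `x`. -/
noncomputable def gAux (k t1 t2 : ℕ) (x : ℝ) : ℝ :=
  ∫ v in Set.univ.pi (fun _ : Fin k => Set.Ioi (0 : ℝ)),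
    (∏ i : Fin (k + 1), ((Fin.snoc v x : Fin (k + 1) → ℝ) i) ^ t1 /
        (1 + (Fin.snoc v x : Fin (k + 1) → ℝ) i) ^ t2) *
      ∏ i : Fin (k + 1), ∏ j ∈ Finset.Ioi i,
        ((Fin.snoc v x : Fin (k + 1) → ℝ) i - (Fin.snoc v x : Fin (k + 1) → ℝ) j) ^ 2

/-- The functional identity `g'_{l,t1,t2}(1/w) = w² · g'_{l,t1',t2}(w)` for all `w > 0`,
where `t1' = t2 − t1 − 2l` and `l = k+1`. -/
theorem stmt8 (k t1 t2 : ℕ) (ht : t1 + 2 * (k + 1) < t2) (w : ℝ) (hw : 0 < w) :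
    gAux k t1 t2 (1 / w) = w ^ 2 * gAux k (t2 - t1 - 2 * (k + 1)) t2 w := by
  classical
  set s : Set (Fin k → ℝ) := Set.univ.pi fun _ => Set.Ioi (0:ℝ) with hs_def
  have hs : MeasurableSet s := MeasurableSet.univ_pi fun _ => measurableSet_Ioi
  set f : (Fin k → ℝ) → (Fin k → ℝ) := fun v i => (v i)⁻¹ with hf_def
  set f' : (Fin k → ℝ) → ((Fin k → ℝ) →L[ℝ] (Fin k → ℝ)) :=
    fun v => ContinuousLinearMap.pi fun i => (-((v i)^2)⁻¹) • (ContinuousLinearMap.proj i)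
    with hf'_def
  have hmem : ∀ v ∈ s, ∀ i, 0 < v i := by
    intro v hv i; exact hv i (Set.mem_univ i)
  have himg : f '' s = s := by
    apply Set.eq_of_subset_of_subset
    · rintro u ⟨v, hv, rfl⟩
      intro i _
      exact inv_pos.2 (hmem v hv i)
    · intro u hu
      refine ⟨f u, ?_, ?_⟩
      · intro i _
        exact inv_pos.2 (hmem u hu i)
      · funext i; simp [hf_def]
  have hderiv : ∀ v ∈ s, HasFDerivWithinAt f (f' v) s v := by
    intro v hv
    apply HasFDerivAt.hasFDerivWithinAt
    apply hasFDerivAt_pi''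
    intro i
    have h1 : HasDerivAt (fun y : ℝ => y⁻¹) (-((v i)^2)⁻¹) (v i) :=
      hasDerivAt_inv (ne_of_gt (hmem v hv i))
    have h2 : HasFDerivAt (𝕜 := ℝ) (fun u : Fin k → ℝ => u i)
        (ContinuousLinearMap.proj i) v := hasFDerivAt_apply (𝕜 := ℝ) i v
    have := h1.comp_hasFDerivAt v h2
    exact this.congr_fderiv (ContinuousLinearMap.ext fun u => by simp [hf'_def])
  have hinj : Set.InjOn f s := by
    intro a _ b _ hab
    funext i
    exact inv_injective (congrFun hab i)
  -- the integrand of `gAux k t1 t2 (1/w)`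
  set G : (Fin k → ℝ) → ℝ := fun v =>
    (∏ i : Fin (k + 1), ((Fin.snoc v (1/w) : Fin (k + 1) → ℝ) i) ^ t1 /
        (1 + (Fin.snoc v (1/w) : Fin (k + 1) → ℝ) i) ^ t2) *
      ∏ i : Fin (k + 1), ∏ j ∈ Finset.Ioi i,
        ((Fin.snoc v (1/w) : Fin (k + 1) → ℝ) i - (Fin.snoc v (1/w) : Fin (k + 1) → ℝ) j) ^ 2
    with hG_def
  set H : (Fin k → ℝ) → ℝ := fun v =>
    (∏ i : Fin (k + 1), ((Fin.snoc v w : Fin (k + 1) → ℝ) i) ^ (t2 - t1 - 2*(k+1)) /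
        (1 + (Fin.snoc v w : Fin (k + 1) → ℝ) i) ^ t2) *
      ∏ i : Fin (k + 1), ∏ j ∈ Finset.Ioi i,
        ((Fin.snoc v w : Fin (k + 1) → ℝ) i - (Fin.snoc v w : Fin (k + 1) → ℝ) j) ^ 2
    with hH_def
  have key : ∀ v ∈ s, |(f' v).det| • G (f v) = w^2 * H v := by
    intro v hv
    have hv0 : ∀ i, v i ≠ 0 := fun i => ne_of_gt (hmem v hv i)
    -- determinant
    have hdet : |(f' v).det| = ∏ i : Fin k, ((v i)^2)⁻¹ := by
      rw [hf'_def]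
      rw [det_pi_smul_proj]
      rw [Finset.abs_prod]
      refine Finset.prod_congr rfl fun i _ => ?_
      rw [abs_neg, abs_of_pos (inv_pos.2 (pow_pos (hmem v hv i) 2))]
    -- snoc commutes with inversion
    set X : Fin (k+1) → ℝ := Fin.snoc v w with hX_def
    have hX : ∀ i, 0 < X i := by
      intro i
      refine Fin.lastCases ?_ ?_ i
      · simp [hX_def, Fin.snoc_last]; exact hw
      · intro j; simp only [hX_def, Fin.snoc_castSucc]; exact hmem v hv j
    have hsnoc : (Fin.snoc (f v) (1/w) : Fin (k+1) → ℝ) = fun i => (X i)⁻¹ := by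
      have : (fun i => (X i)⁻¹) = (Inv.inv : ℝ → ℝ) ∘ (Fin.snoc v w) := rfl
      rw [this, Fin.comp_snoc]
      rw [one_div]
      rfl
    have hprod : (∏ i : Fin k, ((v i)^2)⁻¹)
        = w^2 * ∏ i : Fin (k+1), ((X i)^2)⁻¹ := by
      have : (fun i : Fin (k+1) => ((X i)^2)⁻¹)
          = Fin.snoc (fun i : Fin k => ((v i)^2)⁻¹) ((w^2)⁻¹) := by
        have : (fun i : Fin (k+1) => ((X i)^2)⁻¹)
            = (fun y : ℝ => (y^2)⁻¹) ∘ (Fin.snoc v w) := rfl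
        rw [this, Fin.comp_snoc]
        rfl
      rw [this, Fin.prod_snoc]
      have hw2 : (w^2 : ℝ) ≠ 0 := by positivity
      rw [mul_comm (∏ i : Fin k, ((v i)^2)⁻¹) ((w^2)⁻¹), ← mul_assoc,
        mul_inv_cancel₀ hw2, one_mul]
    have hGfv : G (f v) = (∏ i : Fin (k+1), ((X i)⁻¹)^t1/(1+(X i)⁻¹)^t2) *
        ∏ i : Fin (k+1), ∏ j ∈ Finset.Ioi i, ((X i)⁻¹-(X j)⁻¹)^2 := by
      rw [hG_def]
      simp only [hsnoc]
    rw [smul_eq_mul, hdet, hGfv, hprod, mul_assoc,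
      key_alg (le_of_lt ht) X hX]
  have step1 : gAux k t1 t2 (1/w) = ∫ v in f '' s, G v := by
    rw [himg]; rfl
  rw [step1,
    integral_image_eq_integral_abs_det_fderiv_smul volume hs hderiv hinj G,
    setIntegral_congr_fun hs key]
  rw [MeasureTheory.integral_const_mul]
  rfl
end
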